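/- arXiv:1811.08535 — 6 statements merged into one kernel-verified Lean document; each statement's English description precedes it below -/
import Mathlib

section
/- If a finite simple undirected graph G on vertex set V has vertex connectivity at least 2f (for f > 0), then G is f-good. -/
open Finset

/-- Γ(S): vertices outside `S` with a neighbor in `S`. -/
def nbhd {V : Type*} [Fintype V] [DecidableEq V] (G : SimpleGraph V) [DecidableRel G.Adj]
    (S : Finset V) : Finset V :=
  Finset.univ.filter (fun v => v ∉ S ∧ ∃ u ∈ S, G.Adj u v)

/-- `T →k S`: `|Γ(S) ∩ T| ≥ k`. -/
def connTo {V : Type*} [Fintype V] [DecidableEq V] (G : SimpleGraph V) [DecidableRel G.Adj]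
    (k : ℕ) (T S : Finset V) : Prop :=
  k ≤ (nbhd G S ∩ T).card

/-- `(L, C, R)` is an `F`-partition. -/
def FPartition {V : Type*} [Fintype V] [DecidableEq V] (F L C R : Finset V) : Prop :=
  Disjoint L C ∧ Disjoint L R ∧ Disjoint C R ∧ L ∪ C ∪ R = Finset.univ ∧
    (L \ F).Nonempty ∧ (R \ F).Nonempty

/-- `G` is `f`-good. -/
def fGood {V : Type*} [Fintype V] [DecidableEq V] (G : SimpleGraph V) [DecidableRel G.Adj]
    (f : ℕ) : Prop :=
  ∀ F L C R : Finset V, F.card ≤ f → FPartition F L C R →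
    connTo G (f + 1) (R ∪ C) (L \ F) ∨ connTo G (f + 1) (L ∪ C) (R \ F)

/-- `G` is `k`-connected: more than `k` vertices, and removing fewer than `k`
vertices leaves the graph connected. -/
def kConnected {V : Type*} [Fintype V] [DecidableEq V] (G : SimpleGraph V) (k : ℕ) : Prop :=
  k < Fintype.card V ∧
    ∀ T : Finset V, T.card < k → ((⊤ : G.Subgraph).deleteVerts ↑T).coe.Connected

lemma crossing {V : Type*} [Fintype V] [DecidableEq V] (G : SimpleGraph V) [DecidableRel G.Adj]
    {T S : Finset V} (hconn : ((⊤ : G.Subgraph).deleteVerts ↑T).coe.Connected)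
    (hdisj : ∀ v ∈ S, v ∉ T) (hS : S.Nonempty) (hnb : nbhd G S ⊆ T)
    {y : V} (hy : y ∉ T) : y ∈ S := by
  obtain ⟨x, hx⟩ := hS
  have hxv : x ∈ ((⊤ : G.Subgraph).deleteVerts (↑T : Set V)).verts := by
    simp [SimpleGraph.Subgraph.deleteVerts_verts, hdisj x hx]
  have hyv : y ∈ ((⊤ : G.Subgraph).deleteVerts (↑T : Set V)).verts := by
    simp [SimpleGraph.Subgraph.deleteVerts_verts, hy]
  obtain ⟨w⟩ := hconn ⟨x, hxv⟩ ⟨y, hyv⟩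
  have key : ∀ (a b : ((⊤ : G.Subgraph).deleteVerts (↑T : Set V)).verts)
      (w : ((⊤ : G.Subgraph).deleteVerts (↑T : Set V)).coe.Walk a b),
      (a : V) ∈ S → (b : V) ∈ S := by
    intro a b w
    induction w with
    | nil => exact id
    | @cons u v r h p ih =>
      intro ha
      apply ih
      by_contra hv
      have hadj : G.Adj (u : V) (v : V) := by
        have h' := h
        simp only [SimpleGraph.Subgraph.coe_adj, SimpleGraph.Subgraph.deleteVerts_adj,
          SimpleGraph.Subgraph.top_adj] at h'
        tauto
      have hvnb : (v : V) ∈ nbhd G S := by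
        simp only [nbhd, mem_filter, mem_univ, true_and]
        exact ⟨hv, u, ha, hadj⟩
      have hvT : (v : V) ∉ T := by
        have h2 := v.2
        simp only [SimpleGraph.Subgraph.deleteVerts_verts, SimpleGraph.Subgraph.verts_top,
          Set.mem_diff, Set.mem_univ, true_and, Finset.mem_coe] at h2
        exact h2
      exact hvT (hnb hvnb)
  exact key _ _ w hx

lemma auxlem {V : Type*} [Fintype V] [DecidableEq V] (G : SimpleGraph V) [DecidableRel G.Adj]
    (f : ℕ) (hconn : kConnected G (2 * f))
    (F L C R : Finset V) (hF : F.card ≤ f)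
    (hLC : Disjoint L C) (hLR : Disjoint L R)
    (huniv : L ∪ C ∪ R = Finset.univ)
    (hLne : (L \ F).Nonempty)
    (hA : (nbhd G (L \ F) ∩ (R ∪ C)).card ≤ f) :
    C ∪ R ⊆ nbhd G (L \ F) ∩ (R ∪ C) ∨ (F ⊆ L ∧ f ≤ F.card) := by
  set A := nbhd G (L \ F) ∩ (R ∪ C) with hAdef
  set T := (F ∩ L) ∪ A with hTdef
  -- key: Γ(L\F) ⊆ T
  have hnb : nbhd G (L \ F) ⊆ T := by
    intro v hv
    have hvn : v ∉ L \ F := by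
      simp only [nbhd, mem_filter] at hv
      exact hv.2.1
    have hvu : v ∈ L ∪ C ∪ R := by rw [huniv]; exact mem_univ v
    simp only [mem_union] at hvu
    rcases hvu with (hvL | hvC) | hvR
    · have : v ∈ F := by
        by_contra hvF
        exact hvn (mem_sdiff.mpr ⟨hvL, hvF⟩)
      exact mem_union_left _ (mem_inter.mpr ⟨this, hvL⟩)
    · exact mem_union_right _ (mem_inter.mpr ⟨hv, mem_union_right _ hvC⟩)
    · exact mem_union_right _ (mem_inter.mpr ⟨hv, mem_union_left _ hvR⟩)
  by_cases hTc : T.card < 2 * f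
  · left
    intro y hy
    have hdisj : ∀ v ∈ L \ F, v ∉ T := by
      intro v hv hvT
      obtain ⟨hvL, hvF⟩ := mem_sdiff.mp hv
      rcases mem_union.mp hvT with h | h
      · exact hvF (mem_inter.mp h).1
      · have hh := (mem_inter.mp h).1
        simp only [nbhd, mem_filter] at hh
        exact hh.2.1 hv
    have hySd : y ∉ L \ F := by
      intro hyl
      have hyL := (mem_sdiff.mp hyl).1
      rcases mem_union.mp hy with hC | hR
      · exact disjoint_left.mp hLC hyL hC
      · exact disjoint_left.mp hLR hyL hR
    have hyT : y ∈ T := by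
      by_contra hyT
      exact hySd (crossing G (hconn.2 T hTc) hdisj hLne hnb hyT)
    rcases mem_union.mp hyT with h | h
    · exfalso
      have hyL := (mem_inter.mp h).2
      rcases mem_union.mp hy with hC | hR
      · exact disjoint_left.mp hLC hyL hC
      · exact disjoint_left.mp hLR hyL hR
    · exact h
  · right
    push_neg at hTc
    have hcard : T.card ≤ (F ∩ L).card + A.card := card_union_le _ _
    have hFL : f ≤ (F ∩ L).card := by omega
    have hFLle : (F ∩ L).card ≤ F.card := card_le_card inter_subset_left
    have heq : F ∩ L = F := eq_of_subset_of_card_le inter_subset_left (by omega)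
    exact ⟨(inter_eq_left.mp heq), by omega⟩

theorem stmt0 {V : Type*} [Fintype V] [DecidableEq V] (G : SimpleGraph V) [DecidableRel G.Adj]
    (f : ℕ) (hf : 0 < f) (hconn : kConnected G (2 * f)) : fGood G f := by
  intro F L C R hF hpart
  obtain ⟨hLC, hLR, hCR, huniv, hLne, hRne⟩ := hpart
  by_contra hcon
  push_neg at hcon
  obtain ⟨h1, h2⟩ := hcon
  unfold connTo at h1 h2
  push_neg at h1 h2
  have hA : (nbhd G (L \ F) ∩ (R ∪ C)).card ≤ f := Nat.lt_succ_iff.mp h1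
  have hB : (nbhd G (R \ F) ∩ (L ∪ C)).card ≤ f := Nat.lt_succ_iff.mp h2
  have huniv' : R ∪ C ∪ L = Finset.univ := by
    rw [← huniv]; ext v; simp only [mem_union]; tauto
  have o1 := auxlem G f hconn F L C R hF hLC hLR huniv hLne hA
  have o2 := auxlem G f hconn F R C L hF hCR.symm hLR.symm huniv' hRne hB
  have hcardV : 2 * f < (Finset.univ : Finset V).card := by
    rw [Finset.card_univ]; exact hconn.1
  rcases o1 with hCR1 | ⟨hFL, hfF⟩
  · rcases o2 with hCL1 | ⟨hFR, hfF⟩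
    · -- univ ⊆ A ∪ B, so card V ≤ 2f
      have hsub : (Finset.univ : Finset V) ⊆
          (nbhd G (L \ F) ∩ (R ∪ C)) ∪ (nbhd G (R \ F) ∩ (L ∪ C)) := by
        rw [← huniv]
        intro v hv
        rcases mem_union.mp hv with hv' | hvR
        · rcases mem_union.mp hv' with hvL | hvC
          · exact mem_union_right _ (hCL1 (mem_union_right _ hvL))
          · exact mem_union_left _ (hCR1 (mem_union_left _ hvC))
        · exact mem_union_left _ (hCR1 (mem_union_right _ hvR))
      have := card_le_card hsub
      have := card_union_le (nbhd G (L \ F) ∩ (R ∪ C)) (nbhd G (R \ F) ∩ (L ∪ C))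
      omega
    · -- C ∪ R ⊆ A and F ⊆ R with f ≤ |F| : then R ⊆ A but |R| ≥ f+1
      have hRA : R ⊆ nbhd G (L \ F) ∩ (R ∪ C) := fun v hv => hCR1 (mem_union_right _ hv)
      have h1 : R.card ≤ f := le_trans (card_le_card hRA) hA
      have h2 : (R \ F).card = R.card - F.card := card_sdiff_of_subset hFR
      have h3 : 1 ≤ (R \ F).card := card_pos.mpr hRne
      have h4 : F.card ≤ R.card := card_le_card hFR
      omega
  · rcases o2 with hCL1 | ⟨hFR, hfF'⟩
    · have hLA : L ⊆ nbhd G (R \ F) ∩ (L ∪ C) := fun v hv => hCL1 (mem_union_right _ hv)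
      have h1 : L.card ≤ f := le_trans (card_le_card hLA) hB
      have h2 : (L \ F).card = L.card - F.card := card_sdiff_of_subset hFL
      have h3 : 1 ≤ (L \ F).card := card_pos.mpr hLne
      have h4 : F.card ≤ L.card := card_le_card hFL
      omega
    · -- F ⊆ L and F ⊆ R with L,R disjoint → F = ∅, but f ≤ |F|
      have : F = ∅ := by
        rw [← Finset.subset_empty]
        intro v hv
        exact absurd (hFR hv) (disjoint_left.mp hLR (hFL hv))
      rw [this, card_empty] at hfF
      omega
end

section
/- If a finite simple undirected graph G has vertex connectivity at least ⌊3f/2⌋ + 1 and every vertex has degree at least 2f (for f > 0), then G is f-good. -/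
open Finset

/-- Reachability stays inside an adjacency-closed set. -/
lemma reach_closed {W : Type*} {G' : SimpleGraph W} {A : Set W}
    (hA : ∀ ⦃u v : W⦄, u ∈ A → G'.Adj u v → v ∈ A) {u v : W}
    (h : G'.Reachable u v) (hu : u ∈ A) : v ∈ A := by
  obtain ⟨w⟩ := h
  induction w with
  | nil => exact hu
  | cons h p ih => exact ih (hA hu h)

lemma key_lemma {V : Type*} [Fintype V] [DecidableEq V] (G : SimpleGraph V) [DecidableRel G.Adj]
    (f : ℕ) (hf : 0 < f) (hconn : kConnected G (3 * f / 2 + 1))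
    (hdeg : ∀ v : V, 2 * f ≤ G.degree v)
    (F L C R : Finset V)
    (hLC : Disjoint L C) (hLR : Disjoint L R) (hCR : Disjoint C R)
    (huniv : L ∪ C ∪ R = Finset.univ)
    (hLne : (L \ F).Nonempty) (hRne : (R \ F).Nonempty)
    (hfl : (F ∩ L).card ≤ f / 2)
    (h1 : (nbhd G (L \ F) ∩ (R ∪ C)).card ≤ f)
    (h2 : (nbhd G (R \ F) ∩ (L ∪ C)).card ≤ f) : False := by
  set S1 := nbhd G (L \ F) ∩ (R ∪ C) with hS1
  set S2 := nbhd G (R \ F) ∩ (L ∪ C) with hS2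
  set T := S1 ∪ (F ∩ L) with hT
  have hTcard : T.card < 3 * f / 2 + 1 := by
    have := Finset.card_union_le S1 (F ∩ L)
    rw [hT]
    omega
  have hcon := hconn.2 T hTcard
  obtain ⟨a, ha⟩ := hLne
  have haL : a ∈ L := (Finset.mem_sdiff.1 ha).1
  have haT : a ∉ T := by
    intro hmem
    rcases Finset.mem_union.1 hmem with h | h
    · have := (Finset.mem_inter.1 h).2
      rcases Finset.mem_union.1 this with h' | h'
      · exact (hLR.forall_ne_finset haL h') rfl
      · exact (hLC.forall_ne_finset haL h') rfl
    · exact (Finset.mem_sdiff.1 ha).2 (Finset.mem_inter.1 h).1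
  -- every vertex outside T is in L \ F
  have hclaim : ∀ v : V, v ∉ T → v ∈ L \ F := by
    intro v hv
    have hamem : a ∈ ((⊤ : G.Subgraph).deleteVerts ↑T).verts := by
      simp [SimpleGraph.Subgraph.deleteVerts_verts, haT]
    have hvmem : v ∈ ((⊤ : G.Subgraph).deleteVerts ↑T).verts := by
      simp [SimpleGraph.Subgraph.deleteVerts_verts, hv]
    have hreach := hcon.preconnected ⟨a, hamem⟩ ⟨v, hvmem⟩
    have hclosed : ∀ ⦃x y : ((⊤ : G.Subgraph).deleteVerts ↑T).verts⦄,
        x ∈ {z : ((⊤ : G.Subgraph).deleteVerts ↑T).verts | (z : V) ∈ L \ F} →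
        ((⊤ : G.Subgraph).deleteVerts ↑T).coe.Adj x y →
        y ∈ {z : ((⊤ : G.Subgraph).deleteVerts ↑T).verts | (z : V) ∈ L \ F} := by
      intro x y hx hxy
      have hadj : G.Adj (x : V) (y : V) := by
        have h' : ((⊤ : G.Subgraph).deleteVerts ↑T).Adj x y := hxy
        exact h'.adj_sub
      have hyT : (y : V) ∉ T := by simpa using y.2.2
      by_contra hy
      have hynb : (y : V) ∈ nbhd G (L \ F) := by
        simp only [nbhd, Finset.mem_filter, Finset.mem_univ, true_and]
        exact ⟨hy, x, hx, hadj⟩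
      have hyuniv : (y : V) ∈ L ∪ C ∪ R := by rw [huniv]; exact Finset.mem_univ _
      rcases Finset.mem_union.1 hyuniv with h' | h'
      · rcases Finset.mem_union.1 h' with h'' | h''
        · -- y ∈ L, y ∉ L \ F, so y ∈ F ∩ L ⊆ T
          have : (y : V) ∈ F := by
            by_contra hyF
            exact hy (Finset.mem_sdiff.2 ⟨h'', hyF⟩)
          exact hyT (Finset.mem_union.2 (Or.inr (Finset.mem_inter.2 ⟨this, h''⟩)))
        · -- y ∈ C
          exact hyT (Finset.mem_union.2 (Or.inl
            (Finset.mem_inter.2 ⟨hynb, Finset.mem_union.2 (Or.inr h'')⟩)))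
      · -- y ∈ R
        exact hyT (Finset.mem_union.2 (Or.inl
          (Finset.mem_inter.2 ⟨hynb, Finset.mem_union.2 (Or.inl h')⟩)))
    exact reach_closed hclosed hreach ha
  obtain ⟨b, hb⟩ := hRne
  have hbR : b ∈ R := (Finset.mem_sdiff.1 hb).1
  have hbF : b ∉ F := (Finset.mem_sdiff.1 hb).2
  have hbLF : b ∉ L \ F := by
    intro hmem
    exact (hLR.forall_ne_finset (Finset.mem_sdiff.1 hmem).1 hbR) rfl
  have hbT : b ∈ T := by
    by_contra h
    exact hbLF (hclaim b h)
  have hbS1 : b ∈ S1 := by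
    rcases Finset.mem_union.1 hbT with h | h
    · exact h
    · exact absurd (Finset.mem_inter.1 h).1 hbF
  -- all neighbors of b are in (S1 ∪ S2) \ {b}
  have hsub : G.neighborFinset b ⊆ (S1 ∪ S2).erase b := by
    intro u hu
    have hadj : G.Adj b u := (SimpleGraph.mem_neighborFinset G b u).1 hu
    refine Finset.mem_erase.2 ⟨hadj.ne', ?_⟩
    have huL2 : ∀ hL : u ∈ L, u ∈ S2 := by
      intro hL
      refine Finset.mem_inter.2 ⟨?_, Finset.mem_union.2 (Or.inl hL)⟩
      simp only [nbhd, Finset.mem_filter, Finset.mem_univ, true_and]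
      refine ⟨?_, b, hb, hadj⟩
      intro hmem
      exact (hLR.forall_ne_finset hL (Finset.mem_sdiff.1 hmem).1) rfl
    by_cases huT : u ∈ T
    · rcases Finset.mem_union.1 huT with h | h
      · exact Finset.mem_union.2 (Or.inl h)
      · exact Finset.mem_union.2 (Or.inr (huL2 (Finset.mem_inter.1 h).2))
    · exact Finset.mem_union.2 (Or.inr (huL2 (Finset.mem_sdiff.1 (hclaim u huT)).1))
  have hdegb := hdeg b
  rw [← SimpleGraph.card_neighborFinset_eq_degree] at hdegb
  have h3 := Finset.card_le_card hsub
  have h4 : ((S1 ∪ S2).erase b).card = (S1 ∪ S2).card - 1 :=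
    Finset.card_erase_of_mem (Finset.mem_union.2 (Or.inl hbS1))
  have h5 := Finset.card_union_le S1 S2
  have h6 : 1 ≤ (S1 ∪ S2).card :=
    Finset.card_pos.2 ⟨b, Finset.mem_union.2 (Or.inl hbS1)⟩
  omega

theorem stmt3 {V : Type*} [Fintype V] [DecidableEq V] (G : SimpleGraph V) [DecidableRel G.Adj]
    (f : ℕ) (hf : 0 < f) (hconn : kConnected G (3 * f / 2 + 1))
    (hdeg : ∀ v : V, 2 * f ≤ G.degree v) : fGood G f := by
  intro F L C R hF hp
  obtain ⟨hLC, hLR, hCR, huniv, hLne, hRne⟩ := hp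
  by_contra hcon
  push_neg at hcon
  obtain ⟨h1, h2⟩ := hcon
  unfold connTo at h1 h2
  push_neg at h1 h2
  have h1' : (nbhd G (L \ F) ∩ (R ∪ C)).card ≤ f := by omega
  have h2' : (nbhd G (R \ F) ∩ (L ∪ C)).card ≤ f := by omega
  have hd : Disjoint (F ∩ L) (F ∩ R) :=
    hLR.mono Finset.inter_subset_right Finset.inter_subset_right
  have hcards : (F ∩ L).card + (F ∩ R).card ≤ f := by
    have := Finset.card_union_of_disjoint hd
    have hsub : (F ∩ L) ∪ (F ∩ R) ⊆ F := by
      intro x hx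
      rcases Finset.mem_union.1 hx with h | h
      · exact (Finset.mem_inter.1 h).1
      · exact (Finset.mem_inter.1 h).1
    have := Finset.card_le_card hsub
    omega
  rcases (by omega : (F ∩ L).card ≤ f / 2 ∨ (F ∩ R).card ≤ f / 2) with h | h
  · exact key_lemma G f hf hconn hdeg F L C R hLC hLR hCR huniv hLne hRne h h1' h2'
  · have huniv' : R ∪ C ∪ L = Finset.univ := by
      rw [← huniv]; ext x; simp [Finset.mem_union]; tauto
    exact key_lemma G f hf hconn hdeg F R C L hCR.symm hLR.symm hLC.symm huniv' hRne hLne h h2' h1'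
end

section
/- Let G = (V,E) be a graph, let F ⊆ V with |F| ≤ f, and let (L, C, R) be an F-partition of G such that neither R ∪ C →(f+1) L \ F nor L ∪ C →(f+1) R \ F. If |R ∪ C| > f and |L ∪ C| ≤ f, then every vertex u ∈ L \ F has degree strictly less than 2f in G. -/
open Finset

theorem stmt6 {V : Type*} [Fintype V] [DecidableEq V] (G : SimpleGraph V) [DecidableRel G.Adj]
    (f : ℕ) (F L C R : Finset V) (hF : F.card ≤ f) (hpart : FPartition F L C R)
    (h1 : ¬ connTo G (f + 1) (R ∪ C) (L \ F)) (h2 : ¬ connTo G (f + 1) (L ∪ C) (R \ F))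
    (hRC : f < (R ∪ C).card) (hLC : (L ∪ C).card ≤ f) :
    ∀ u ∈ L \ F, G.degree u < 2 * f := by
  intro u hu
  obtain ⟨hLC', hLR, hCR, huniv, -, -⟩ := hpart
  have huL : u ∈ L := (mem_sdiff.mp hu).1
  have hf1 : 1 ≤ f := le_trans (card_le_card (singleton_subset_iff.mpr
    (mem_union_left C huL))) hLC
  have hsub : G.neighborFinset u ⊆ ((L ∪ C).erase u) ∪ (nbhd G (L \ F) ∩ (R ∪ C)) := by
    intro v hv
    rw [SimpleGraph.mem_neighborFinset] at hv
    have hvuniv : v ∈ L ∪ C ∪ R := huniv ▸ mem_univ v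
    rcases mem_union.mp hvuniv with h | h
    · exact mem_union_left _ (mem_erase.mpr ⟨fun e => G.irrefl (e ▸ hv), h⟩)
    · refine mem_union_right _ (mem_inter.mpr ⟨?_, mem_union_left _ h⟩)
      simp only [nbhd, mem_filter, mem_univ, true_and]
      refine ⟨fun hvLF => ?_, u, hu, hv⟩
      exact (disjoint_left.mp hLR) (mem_sdiff.mp hvLF).1 h
  have h1' : (nbhd G (L \ F) ∩ (R ∪ C)).card ≤ f := by
    by_contra hc
    exact h1 (Nat.succ_le_of_lt (lt_of_not_ge hc))
  have herase : ((L ∪ C).erase u).card ≤ f - 1 := by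
    have := card_erase_of_mem (mem_union_left C huL)
    omega
  calc G.degree u = (G.neighborFinset u).card := rfl
    _ ≤ _ := card_le_card hsub
    _ ≤ ((L ∪ C).erase u).card + (nbhd G (L \ F) ∩ (R ∪ C)).card := card_union_le _ _
    _ < 2 * f := by omega
end

section
/- Let G = (V,E) be a graph, F ⊆ V with |F| ≤ f, and (L, C, R) an F-partition such that neither R ∪ C →(f+1) L \ F nor L ∪ C →(f+1) R \ F, with |R ∪ C| > f, |L ∪ C| > f, and |L ∩ F| ≤ |R ∩ F|. Then removing the vertex set T = (Γ(L \ F) ∩ (R ∪ C)) ∪ (L ∩ F), which has size at most ⌊3f/2⌋, disconnects the nonempty set L \ F from the nonempty set (R ∪ C) \ Γ(L \ F): no edge of G joins L \ F to a vertex outside (L \ F) ∪ T except into T. -/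
open Finset

theorem stmt7 {V : Type*} [Fintype V] [DecidableEq V] (G : SimpleGraph V) [DecidableRel G.Adj]
    (f : ℕ) (F L C R : Finset V) (hF : F.card ≤ f) (hpart : FPartition F L C R)
    (h1 : ¬ connTo G (f + 1) (R ∪ C) (L \ F)) (h2 : ¬ connTo G (f + 1) (L ∪ C) (R \ F))
    (hRC : f < (R ∪ C).card) (hLC : f < (L ∪ C).card)
    (hLR : (L ∩ F).card ≤ (R ∩ F).card) :
    ((nbhd G (L \ F) ∩ (R ∪ C)) ∪ (L ∩ F)).card ≤ 3 * f / 2 ∧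
    (L \ F).Nonempty ∧ ((R ∪ C) \ nbhd G (L \ F)).Nonempty ∧
    ∀ x ∈ L \ F, ∀ y : V, G.Adj x y →
      y ∈ (L \ F) ∪ ((nbhd G (L \ F) ∩ (R ∪ C)) ∪ (L ∩ F)) := by

  obtain ⟨hLCd, hLRd, hCRd, huniv, hLne, hRne⟩ := hpart
  have hn1 : (nbhd G (L \ F) ∩ (R ∪ C)).card ≤ f := by
    simp only [connTo, not_le] at h1; omega
  have hLF2 : (L ∩ F).card ≤ f / 2 := by
    have hdisj : Disjoint (L ∩ F) (R ∩ F) :=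
      hLRd.mono inter_subset_left inter_subset_left
    have := card_union_of_disjoint hdisj
    have hsub : (L ∩ F) ∪ (R ∩ F) ⊆ F := by
      intro x hx; simp only [mem_union, mem_inter] at hx; tauto
    have := card_le_card hsub
    omega
  refine ⟨?_, hLne, ?_, ?_⟩
  · have := card_union_le (nbhd G (L \ F) ∩ (R ∪ C)) (L ∩ F)
    omega
  · rw [← card_pos]
    have hsub : nbhd G (L \ F) ∩ (R ∪ C) ⊆ R ∪ C := inter_subset_right
    have : (R ∪ C) \ nbhd G (L \ F) = (R ∪ C) \ (nbhd G (L \ F) ∩ (R ∪ C)) := by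
      ext x; simp only [mem_sdiff, mem_inter]; tauto
    rw [this, card_sdiff_of_subset hsub]
    omega
  · intro x hx y hadj
    by_cases hyL : y ∈ L \ F
    · exact mem_union_left _ hyL
    · have hynb : y ∈ nbhd G (L \ F) := by
        simp only [nbhd, mem_filter, mem_univ, true_and]
        exact ⟨hyL, x, hx, hadj⟩
      refine mem_union_right _ ?_
      by_cases hyRC : y ∈ R ∪ C
      · exact mem_union_left _ (mem_inter.mpr ⟨hynb, hyRC⟩)
      · have : y ∈ L := by
          have : y ∈ L ∪ C ∪ R := huniv ▸ mem_univ y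
          simp only [mem_union] at this hyRC; tauto
        have hyF : y ∈ F := by
          simp only [mem_sdiff] at hyL; tauto
        exact mem_union_right _ (mem_inter.mpr ⟨this, hyF⟩)
end

section
/- Let G = (V,E) be a graph with a vertex cut T of size at most ⌊3f/2⌋ separating nonempty sets A and B (i.e., (A, T, B) partitions V and no edge joins A to B). Then G is not f-good: there exists F ⊆ V with |F| ≤ f and an F-partition (L, C, R) such that neither R ∪ C →(f+1) L \ F nor L ∪ C →(f+1) R \ F. -/
open Finset

theorem stmt8 {V : Type*} [Fintype V] [DecidableEq V] (G : SimpleGraph V) [DecidableRel G.Adj]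
    (f : ℕ) (hf : 1 ≤ f) (A T B : Finset V)
    (hAT : Disjoint A T) (hAB : Disjoint A B) (hTB : Disjoint T B)
    (hunion : A ∪ T ∪ B = Finset.univ)
    (hA : A.Nonempty) (hB : B.Nonempty) (hT : T.card ≤ 3 * f / 2)
    (hsep : ∀ a ∈ A, ∀ b ∈ B, ¬ G.Adj a b)
    (hGA : nbhd G A = T) (hGB : nbhd G B = T) :
    ∃ F L C R : Finset V, F.card ≤ f ∧ FPartition F L C R ∧
      ¬ connTo G (f + 1) (R ∪ C) (L \ F) ∧ ¬ connTo G (f + 1) (L ∪ C) (R \ F) := by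
  classical
  have h2t : 2 * T.card ≤ 3 * f := by omega
  obtain ⟨Z, hZT, hZcard⟩ := T.exists_subset_card_eq (n := T.card / 3) (Nat.div_le_self _ _)
  obtain ⟨X, hXT', hXcard⟩ :=
    (T \ Z).exists_subset_card_eq (n := (T \ Z).card / 2) (Nat.div_le_self _ _)
  set Y := (T \ Z) \ X with hYdef
  have hcardTZ : (T \ Z).card = T.card - Z.card := card_sdiff_of_subset hZT
  have hYcard : Y.card = (T \ Z).card - X.card := card_sdiff_of_subset hXT'
  have hXT : X ⊆ T := hXT'.trans (sdiff_subset)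
  have hYT : Y ⊆ T := (sdiff_subset).trans (sdiff_subset)
  have hXZ : Disjoint X Z := disjoint_of_subset_left hXT' sdiff_disjoint
  have hYX : Disjoint Y X := sdiff_disjoint
  have hYZ : Disjoint Y Z := disjoint_of_subset_left (sdiff_subset) sdiff_disjoint
  -- membership versions
  have mAT : ∀ v ∈ A, v ∉ T := fun v hv => Finset.disjoint_left.mp hAT hv
  have mAB : ∀ v ∈ A, v ∉ B := fun v hv => Finset.disjoint_left.mp hAB hv
  have mTB : ∀ v ∈ T, v ∉ B := fun v hv => Finset.disjoint_left.mp hTB hv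
  have mX : ∀ v ∈ X, v ∈ T ∧ v ∉ Z := fun v hv => Finset.mem_sdiff.mp (hXT' hv)
  have mY : ∀ v ∈ Y, v ∈ T ∧ v ∉ Z ∧ v ∉ X := by
    intro v hv
    have h1 := Finset.mem_sdiff.mp hv
    have h2 := Finset.mem_sdiff.mp h1.1
    exact ⟨h2.1, h2.2, h1.2⟩
  have mZ : ∀ v ∈ Z, v ∈ T := fun v hv => hZT hv
  have hXYZ : ∀ v ∈ T, v ∈ X ∨ v ∈ Y ∨ v ∈ Z := by
    intro v hv
    by_cases hz : v ∈ Z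
    · exact Or.inr (Or.inr hz)
    by_cases hx : v ∈ X
    · exact Or.inl hx
    · exact Or.inr (Or.inl (by simp [hYdef, Finset.mem_sdiff, hv, hz, hx]))
  refine ⟨T \ Z, A ∪ X, Z, B ∪ Y, ?_, ?_, ?_, ?_⟩
  · -- card bound
    rw [hcardTZ]; omega
  · -- FPartition
    have hLF : (A ∪ X) \ (T \ Z) = A := by
      ext v
      simp only [Finset.mem_sdiff, Finset.mem_union]
      constructor
      · rintro ⟨hv | hv, h2⟩
        · exact hv
        · exact absurd ⟨(mX v hv).1, (mX v hv).2⟩ h2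
      · intro hv
        exact ⟨Or.inl hv, fun h => mAT v hv h.1⟩
    have hRF : (B ∪ Y) \ (T \ Z) = B := by
      ext v
      simp only [Finset.mem_sdiff, Finset.mem_union]
      constructor
      · rintro ⟨hv | hv, h2⟩
        · exact hv
        · exact absurd ⟨(mY v hv).1, (mY v hv).2.1⟩ h2
      · intro hv
        exact ⟨Or.inl hv, fun h => mTB v h.1 hv⟩
    refine ⟨?_, ?_, ?_, ?_, ?_, ?_⟩
    · rw [Finset.disjoint_union_left]
      exact ⟨Finset.disjoint_left.mpr (fun v hv hz => mAT v hv (mZ v hz)), hXZ⟩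
    · rw [Finset.disjoint_union_left]
      constructor
      · rw [Finset.disjoint_union_right]
        exact ⟨hAB, Finset.disjoint_left.mpr (fun v hv hy => mAT v hv (mY v hy).1)⟩
      · rw [Finset.disjoint_union_right]
        exact ⟨Finset.disjoint_left.mpr (fun v hv hb => mTB v (mX v hv).1 hb),
          hYX.symm⟩
    · rw [Finset.disjoint_union_right]
      exact ⟨Finset.disjoint_left.mpr (fun v hv hb => mTB v (mZ v hv) hb), hYZ.symm⟩
    · ext v
      simp only [Finset.mem_union, Finset.mem_univ, iff_true]
      have hv : v ∈ A ∪ T ∪ B := by rw [hunion]; exact Finset.mem_univ v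
      simp only [Finset.mem_union] at hv
      rcases hv with (hv | hv) | hv
      · exact Or.inl (Or.inl (Or.inl hv))
      · rcases hXYZ v hv with hx | hy | hz
        · exact Or.inl (Or.inl (Or.inr hx))
        · exact Or.inr (Or.inr hy)
        · exact Or.inl (Or.inr hz)
      · exact Or.inr (Or.inl hv)
    · rw [hLF]; exact hA
    · rw [hRF]; exact hB
  · -- ¬ connTo (R ∪ C) (L \ F)
    have hLF : (A ∪ X) \ (T \ Z) = A := by
      ext v
      simp only [Finset.mem_sdiff, Finset.mem_union]
      constructor
      · rintro ⟨hv | hv, h2⟩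
        · exact hv
        · exact absurd ⟨(mX v hv).1, (mX v hv).2⟩ h2
      · intro hv
        exact ⟨Or.inl hv, fun h => mAT v hv h.1⟩
    rw [connTo, hLF, hGA]
    have hint : T ∩ (B ∪ Y ∪ Z) = Y ∪ Z := by
      ext v
      simp only [Finset.mem_inter, Finset.mem_union]
      constructor
      · rintro ⟨hvT, (hv | hv) | hv⟩
        · exact absurd hv (mTB v hvT)
        · exact Or.inl hv
        · exact Or.inr hv
      · rintro (hv | hv)
        · exact ⟨(mY v hv).1, Or.inl (Or.inr hv)⟩
        · exact ⟨mZ v hv, Or.inr hv⟩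
    rw [hint, Finset.card_union_of_disjoint hYZ]
    rw [hcardTZ] at hYcard
    omega
  · -- ¬ connTo (L ∪ C) (R \ F)
    have hRF : (B ∪ Y) \ (T \ Z) = B := by
      ext v
      simp only [Finset.mem_sdiff, Finset.mem_union]
      constructor
      · rintro ⟨hv | hv, h2⟩
        · exact hv
        · exact absurd ⟨(mY v hv).1, (mY v hv).2.1⟩ h2
      · intro hv
        exact ⟨Or.inl hv, fun h => mTB v h.1 hv⟩
    rw [connTo, hRF, hGB]
    have hint : T ∩ (A ∪ X ∪ Z) = X ∪ Z := by
      ext v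
      simp only [Finset.mem_inter, Finset.mem_union]
      constructor
      · rintro ⟨hvT, (hv | hv) | hv⟩
        · exact absurd hvT (mAT v hv)
        · exact Or.inl hv
        · exact Or.inr hv
      · rintro (hv | hv)
        · exact ⟨(mX v hv).1, Or.inl (Or.inr hv)⟩
        · exact ⟨mZ v hv, Or.inr hv⟩
    rw [hint, Finset.card_union_of_disjoint hXZ]
    rw [hcardTZ] at hYcard
    omega
end

section
/- If a graph G has a vertex u of degree strictly less than 2f, and |V| ≥ 2f + 1, then G is not f-good: taking F to be min(f−1, deg(u)) neighbors of u, L = {u} ∪ F, C = ∅, and R = V \ L yields an F-partition with neither R ∪ C →(f+1) L \ F nor L ∪ C →(f+1) R \ F. -/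
open Finset

theorem stmt10 {V : Type*} [Fintype V] [DecidableEq V] (G : SimpleGraph V) [DecidableRel G.Adj]
    (f : ℕ) (hf : 1 ≤ f) (u : V) (hdeg : G.degree u < 2 * f)
    (hn : 2 * f + 1 ≤ Fintype.card V) :
    ∃ F : Finset V, F ⊆ G.neighborFinset u ∧ F.card = min (f - 1) (G.degree u) ∧
      FPartition F (insert u F) ∅ (Finset.univ \ insert u F) ∧
      ¬ connTo G (f + 1) ((Finset.univ \ insert u F) ∪ ∅) (insert u F \ F) ∧
      ¬ connTo G (f + 1) (insert u F ∪ ∅) ((Finset.univ \ insert u F) \ F) := by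
  have hdeg' : (G.neighborFinset u).card = G.degree u := G.card_neighborFinset_eq_degree u
  obtain ⟨F, hFsub, hFcard⟩ := Finset.exists_subset_card_eq (s := G.neighborFinset u)
    (n := min (f - 1) (G.degree u)) (by rw [hdeg']; exact min_le_right _ _)
  have huF : u ∉ F := fun h => G.loopless.irrefl u ((SimpleGraph.mem_neighborFinset _ _ _).mp (hFsub h))
  have hFle : F.card ≤ f - 1 := hFcard ▸ min_le_left _ _
  have hLcard : (insert u F).card = F.card + 1 := Finset.card_insert_of_notMem huF
  refine ⟨F, hFsub, hFcard, ⟨Finset.disjoint_empty_right _, Finset.disjoint_sdiff,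
    Finset.disjoint_empty_left _, by rw [Finset.union_empty,
      Finset.union_sdiff_of_subset (Finset.subset_univ _)],
    ⟨u, Finset.mem_sdiff.mpr ⟨Finset.mem_insert_self _ _, huF⟩⟩, ?_⟩, ?_, ?_⟩
  · have h2 : (Finset.univ \ insert u F) \ F = Finset.univ \ insert u F := by
      rw [Finset.sdiff_eq_self_iff_disjoint]
      exact Finset.sdiff_disjoint.mono_right (Finset.subset_insert u F)
    rw [h2, ← Finset.card_pos, Finset.card_sdiff_of_subset (Finset.subset_univ _), Finset.card_univ]
    omega
  · simp only [connTo, not_le, Finset.union_empty]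
    have hsd : insert u F \ F = {u} := by
      ext a
      simp only [Finset.mem_sdiff, Finset.mem_insert, Finset.mem_singleton]
      constructor
      · rintro ⟨h | h, hn⟩
        · exact h
        · exact absurd h hn
      · rintro rfl; exact ⟨Or.inl rfl, huF⟩
    have hnb : nbhd G {u} = G.neighborFinset u := by
      ext v
      simp only [nbhd, Finset.mem_filter, Finset.mem_univ, true_and, Finset.mem_singleton,
        exists_eq_left, SimpleGraph.mem_neighborFinset]
      exact ⟨fun h => h.2, fun h => ⟨h.ne', h⟩⟩
    have hsub : nbhd G (insert u F \ F) ∩ (Finset.univ \ insert u F) ⊆ G.neighborFinset u \ F := by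
      intro v hv
      rw [Finset.mem_inter, hsd, hnb] at hv
      rw [Finset.mem_sdiff]
      exact ⟨hv.1, fun h => (Finset.mem_sdiff.mp hv.2).2 (Finset.mem_insert_of_mem h)⟩
    have := Finset.card_le_card hsub
    rw [Finset.card_sdiff_of_subset hFsub, hdeg'] at this
    omega
  · simp only [connTo, not_le, Finset.union_empty]
    have : (nbhd G ((Finset.univ \ insert u F) \ F) ∩ insert u F).card ≤ (insert u F).card :=
      Finset.card_le_card Finset.inter_subset_right
    omega
end
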